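/- There is a universal constant K > 0 with the following property. Let θ ∈ ℝ² be a unit vector and let v, v' ∈ ℝ² be vectors with v×θ ≠ 0, v·θ ≠ 0 and v×v' ≠ 0, and define λ(t) := −log((v·θ)²e^{−t} + (v×θ)²e^{t}) for t ∈ ℝ. Then λ attains a unique maximum, at the point T = log|v·θ| − log|v×θ| with maximal value M = −log|v·θ| − log|v×θ| − log 2; moreover, if v·θ ≥ |v|/√2, v'·θ ≥ |v'|/√2, v·v' ≥ |v||v'|/√2 (i.e. each of the angles between v and θ, v' and θ, v and v' is at most π/4) and |v'×θ|·|v|/|v×v'| ≤ 1/2, then |T − log(|v||v'|/|v×v'|)| ≤ K and |M − log(|v'|/(|v||v×v'|))| ≤ K. -/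

import Mathlib

open Pointwise

noncomputable section

/-- Cross product of two vectors in ℝ²: `(a,b) × (c,d) = a d − b c`. -/
def crossP (u v : ℝ × ℝ) : ℝ := u.1 * v.2 - u.2 * v.1

/-- Euclidean inner product on ℝ². -/
def dotP (u v : ℝ × ℝ) : ℝ := u.1 * v.1 + u.2 * v.2

/-- Euclidean norm on ℝ². -/
def nrm (u : ℝ × ℝ) : ℝ := Real.sqrt (u.1 ^ 2 + u.2 ^ 2)

/-- `lam θ v t = −log |g_t^θ v|² = −log((v·θ)² e^{−t} + (v×θ)² e^{t})`. -/
def lam (θ v : ℝ × ℝ) (t : ℝ) : ℝ :=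
  -Real.log ((dotP v θ) ^ 2 * Real.exp (-t) + (crossP v θ) ^ 2 * Real.exp t)

/-- The critical time `T = log|v·θ| − log|v×θ|`. -/
def Tcrit (θ v : ℝ × ℝ) : ℝ := Real.log |dotP v θ| - Real.log |crossP v θ|

/-- The critical value `M = −log|v·θ| − log|v×θ| − log 2`. -/
def Mcrit (θ v : ℝ × ℝ) : ℝ := -Real.log |dotP v θ| - Real.log |crossP v θ| - Real.log 2

lemma sq_pos_of_ne_zero' (x : ℝ) (hx : x ≠ 0) : 0 < x ^ 2 :=
  lt_of_le_of_ne (sq_nonneg x) (Ne.symm (pow_ne_zero 2 hx))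

set_option maxHeartbeats 2000000 in
theorem slowly_divergent_peak :
    ∃ K : ℝ, 0 < K ∧
      ∀ θ v v' : ℝ × ℝ, nrm θ = 1 →
        crossP v θ ≠ 0 → dotP v θ ≠ 0 → crossP v v' ≠ 0 →
        ((∀ t : ℝ, t ≠ Tcrit θ v → lam θ v t < lam θ v (Tcrit θ v)) ∧
         lam θ v (Tcrit θ v) = Mcrit θ v ∧
         (nrm v / Real.sqrt 2 ≤ dotP v θ →
          nrm v' / Real.sqrt 2 ≤ dotP v' θ →
          nrm v * nrm v' / Real.sqrt 2 ≤ dotP v v' →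
          |crossP v' θ| * nrm v / |crossP v v'| ≤ 1 / 2 →
          |Tcrit θ v - Real.log (nrm v * nrm v' / |crossP v v'|)| ≤ K ∧
          |Mcrit θ v - Real.log (nrm v' / (nrm v * |crossP v v'|))| ≤ K)) := by
  refine ⟨10, by norm_num, ?_⟩
  intro θ v v' hθ hb0 ha0 hc0
  have pa : 0 < |dotP v θ| := abs_pos.mpr ha0
  have pb : 0 < |crossP v θ| := abs_pos.mpr hb0
  have pc : 0 < |crossP v v'| := abs_pos.mpr hc0
  have hθ2 : θ.1 ^ 2 + θ.2 ^ 2 = 1 := by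
    have h := congrArg (· ^ 2) hθ
    simpa [nrm, Real.sq_sqrt (by positivity : (0:ℝ) ≤ θ.1 ^ 2 + θ.2 ^ 2)] using h
  have hT : Real.exp (Tcrit θ v) = |dotP v θ| / |crossP v θ| := by
    simp only [Tcrit]
    rw [Real.exp_sub, Real.exp_log pa, Real.exp_log pb]
  have valT : (dotP v θ) ^ 2 * Real.exp (-(Tcrit θ v)) + (crossP v θ) ^ 2 * Real.exp (Tcrit θ v)
      = 2 * (|dotP v θ| * |crossP v θ|) := by
    rw [Real.exp_neg, hT, ← sq_abs (dotP v θ), ← sq_abs (crossP v θ)]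
    have ea : dotP v θ ^ 2 = |dotP v θ| ^ 2 := (sq_abs _).symm
    have eb : crossP v θ ^ 2 = |crossP v θ| ^ 2 := (sq_abs _).symm
    field_simp
    ring
  have key : ∀ t : ℝ, t ≠ Tcrit θ v →
      2 * (|dotP v θ| * |crossP v θ|) < (dotP v θ) ^ 2 * Real.exp (-t) + (crossP v θ) ^ 2 * Real.exp t := by
    intro t ht
    have e2 : Real.exp (t/2) ^ 2 = Real.exp t := by
      rw [sq, ← Real.exp_add]; norm_num
    have e2' : Real.exp (-t/2) ^ 2 = Real.exp (-t) := by
      rw [sq, ← Real.exp_add]; norm_num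
    have e0 : Real.exp (-t/2) * Real.exp (t/2) = 1 := by
      rw [← Real.exp_add, show -t/2 + t/2 = 0 from by ring, Real.exp_zero]
    set x := |dotP v θ| * Real.exp (-t/2) with hx
    set y := |crossP v θ| * Real.exp (t/2) with hy
    have hxsq : x ^ 2 = (dotP v θ) ^ 2 * Real.exp (-t) := by
      rw [hx, mul_pow, sq_abs, e2']
    have hysq : y ^ 2 = (crossP v θ) ^ 2 * Real.exp t := by
      rw [hy, mul_pow, sq_abs, e2]
    have hxyprod : x * y = |dotP v θ| * |crossP v θ| := by
      rw [hx, hy]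
      calc |dotP v θ| * Real.exp (-t/2) * (|crossP v θ| * Real.exp (t/2))
          = |dotP v θ| * |crossP v θ| * (Real.exp (-t/2) * Real.exp (t/2)) := by ring
        _ = |dotP v θ| * |crossP v θ| := by rw [e0, mul_one]
    have hxy : x ≠ y := by
      intro h
      apply ht
      have h2 : |dotP v θ| = |crossP v θ| * Real.exp t := by
        calc |dotP v θ| = |dotP v θ| * (Real.exp (-t/2) * Real.exp (t/2)) := by
              rw [e0, mul_one]
          _ = (|dotP v θ| * Real.exp (-t/2)) * Real.exp (t/2) := by ring
          _ = (|crossP v θ| * Real.exp (t/2)) * Real.exp (t/2) := by rw [← hx, h, hy]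
          _ = |crossP v θ| * Real.exp t := by rw [mul_assoc, ← sq, e2]
      have h3 : Real.exp t = Real.exp (Tcrit θ v) := by
        rw [hT]
        field_simp
        linarith [h2]
      exact Real.exp_eq_exp.mp h3
    have hpos : 0 < (x - y) ^ 2 := sq_pos_of_ne_zero' _ (sub_ne_zero.mpr hxy)
    rw [← hxsq, ← hysq, ← hxyprod]
    nlinarith [hpos]
  have posT : 0 < 2 * (|dotP v θ| * |crossP v θ|) := by positivity
  refine ⟨?_, ?_, ?_⟩
  · intro t ht
    have h1 := key t ht
    simp only [lam]
    have := Real.log_lt_log posT h1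
    rw [valT]
    linarith [this]
  · simp only [lam, Mcrit]
    rw [valT, Real.log_mul (by norm_num) (by positivity), Real.log_mul pa.ne' pb.ne']
    ring
  · intro h1 h2 _ h4
    -- Basic positivity and norms
    have hnv2 : nrm v ^ 2 = v.1 ^ 2 + v.2 ^ 2 := Real.sq_sqrt (by positivity)
    have hnv'2 : nrm v' ^ 2 = v'.1 ^ 2 + v'.2 ^ 2 := Real.sq_sqrt (by positivity)
    have hid : (dotP v θ) ^ 2 + (crossP v θ) ^ 2 = v.1 ^ 2 + v.2 ^ 2 := by
      simp only [dotP, crossP]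
      linear_combination (v.1 ^ 2 + v.2 ^ 2) * hθ2
    have hid' : (dotP v' θ) ^ 2 + (crossP v' θ) ^ 2 = v'.1 ^ 2 + v'.2 ^ 2 := by
      simp only [dotP, crossP]
      linear_combination (v'.1 ^ 2 + v'.2 ^ 2) * hθ2
    have hlag : crossP v v' ^ 2 + dotP v v' ^ 2 = (v.1 ^ 2 + v.2 ^ 2) * (v'.1 ^ 2 + v'.2 ^ 2) := by
      simp only [dotP, crossP]; ring
    have hv1pos : 0 < v.1 ^ 2 + v.2 ^ 2 := by
      linarith [sq_pos_of_ne_zero' _ ha0, sq_nonneg (crossP v θ), hid]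
    have pnv : 0 < nrm v := Real.sqrt_pos.mpr hv1pos
    have hv'1pos : 0 < v'.1 ^ 2 + v'.2 ^ 2 := by
      by_contra hcon
      push_neg at hcon
      have e1 : v'.1 ^ 2 = 0 := le_antisymm (by linarith [sq_nonneg v'.2]) (sq_nonneg _)
      have e2 : v'.2 ^ 2 = 0 := le_antisymm (by linarith [sq_nonneg v'.1]) (sq_nonneg _)
      have f1 : v'.1 = 0 := by
        have := pow_eq_zero_iff (n := 2) (by norm_num) |>.mp e1
        exact this
      have f2 : v'.2 = 0 := by
        have := pow_eq_zero_iff (n := 2) (by norm_num) |>.mp e2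
        exact this
      exact hc0 (by simp [crossP, f1, f2])
    have pnv' : 0 < nrm v' := Real.sqrt_pos.mpr hv'1pos
    have habs_a : |dotP v θ| ≤ nrm v := by
      rw [← Real.sqrt_sq_eq_abs]; simp only [nrm]
      exact Real.sqrt_le_sqrt (by linarith [hid, sq_nonneg (crossP v θ)])
    have habs_a' : |dotP v' θ| ≤ nrm v' := by
      rw [← Real.sqrt_sq_eq_abs]; simp only [nrm]
      exact Real.sqrt_le_sqrt (by linarith [hid', sq_nonneg (crossP v' θ)])
    have hs2pos : 0 < Real.sqrt 2 := by positivity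
    have hs2 : Real.sqrt 2 ≤ 2 := by
      nlinarith [Real.sq_sqrt (by norm_num : (0:ℝ) ≤ 2), Real.sqrt_nonneg 2]
    have ha_pos : 0 < dotP v θ := lt_of_lt_of_le (by positivity) h1
    have hd'_pos : 0 < dotP v' θ := lt_of_lt_of_le (by positivity) h2
    have haL : nrm v / Real.sqrt 2 ≤ |dotP v θ| := by
      rw [abs_of_pos ha_pos]; exact h1
    have h4' : |crossP v' θ| * nrm v ≤ 1 / 2 * |crossP v v'| := (div_le_iff₀ pc).mp h4
    -- key identity
    have hstar : dotP v' θ * crossP v θ - dotP v θ * crossP v' θ = crossP v v' := by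
      simp only [dotP, crossP]
      linear_combination (v.1 * v'.2 - v.2 * v'.1) * hθ2
    have hacross : |dotP v θ| * |crossP v' θ| ≤ |crossP v v'| / 2 := by
      have := mul_le_mul_of_nonneg_right habs_a (abs_nonneg (crossP v' θ))
      linarith [h4']
    -- lower bound : c/2 ≤ nrm v' * |b|
    have hlow : |crossP v v'| / 2 ≤ nrm v' * |crossP v θ| := by
      have e2 : |crossP v v'| ≤ |dotP v' θ| * |crossP v θ| + |dotP v θ| * |crossP v' θ| := by
        calc |crossP v v'| = |dotP v' θ * crossP v θ - dotP v θ * crossP v' θ| := by rw [hstar]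
          _ = |dotP v' θ * crossP v θ + -(dotP v θ * crossP v' θ)| := by ring_nf
          _ ≤ |dotP v' θ * crossP v θ| + |-(dotP v θ * crossP v' θ)| := abs_add_le _ _
          _ = |dotP v' θ| * |crossP v θ| + |dotP v θ| * |crossP v' θ| := by
              rw [abs_neg, abs_mul, abs_mul]
      have e3 := mul_le_mul_of_nonneg_right habs_a' (abs_nonneg (crossP v θ))
      linarith [e2, e3, hacross]
    -- upper bound : nrm v' * |b| ≤ 3 c
    have hup : nrm v' * |crossP v θ| ≤ 3 * |crossP v v'| := by
      have e1 : |dotP v' θ| * |crossP v θ| ≤ |crossP v v'| + |dotP v θ| * |crossP v' θ| := by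
        rw [← abs_mul]
        calc |dotP v' θ * crossP v θ| = |crossP v v' + dotP v θ * crossP v' θ| := by
              rw [show dotP v' θ * crossP v θ = crossP v v' + dotP v θ * crossP v' θ from by
                linarith [hstar]]
          _ ≤ |crossP v v'| + |dotP v θ * crossP v' θ| := abs_add_le _ _
          _ = |crossP v v'| + |dotP v θ| * |crossP v' θ| := by rw [abs_mul]
      have e3 : nrm v' / Real.sqrt 2 * |crossP v θ| ≤ |dotP v' θ| * |crossP v θ| := by
        apply mul_le_mul_of_nonneg_right _ (abs_nonneg (crossP v θ))
        rw [abs_of_pos hd'_pos]; exact h2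
      have e5 : nrm v' / Real.sqrt 2 * |crossP v θ| ≤ 3 / 2 * |crossP v v'| := by
        linarith [e1, e3, hacross]
      have e6 : nrm v' * |crossP v θ| = (nrm v' / Real.sqrt 2 * |crossP v θ|) * Real.sqrt 2 := by
        field_simp
      have e7 : nrm v' * |crossP v θ| ≤ 3 / 2 * |crossP v v'| * Real.sqrt 2 := by
        rw [e6]; exact mul_le_mul_of_nonneg_right e5 hs2pos.le
      have e8 : 3 / 2 * |crossP v v'| * Real.sqrt 2 ≤ 3 / 2 * |crossP v v'| * 2 :=
        mul_le_mul_of_nonneg_left hs2 (by positivity)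
      linarith [e7, e8]
    -- log bounds
    have hlog2a : Real.log 2 ≤ 1 := by
      have := Real.log_le_sub_one_of_pos (by norm_num : (0:ℝ) < 2); linarith
    have hlog2b : (0:ℝ) ≤ Real.log 2 := Real.log_nonneg (by norm_num)
    have hlog3a : Real.log 3 ≤ 2 := by
      have := Real.log_le_sub_one_of_pos (by norm_num : (0:ℝ) < 3); linarith
    have hlog3b : (0:ℝ) ≤ Real.log 3 := Real.log_nonneg (by norm_num)
    have B1 : Real.log |dotP v θ| ≤ Real.log (nrm v) :=
      Real.log_le_log pa habs_a
    have B2 : Real.log (nrm v) - Real.log 2 ≤ Real.log |dotP v θ| := by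
      have hhalf : nrm v / 2 ≤ |dotP v θ| := by
        have : nrm v / 2 ≤ nrm v / Real.sqrt 2 := by
          apply div_le_div_of_nonneg_left pnv.le hs2pos hs2
        linarith [haL]
      have := Real.log_le_log (by positivity : (0:ℝ) < nrm v / 2) hhalf
      rwa [Real.log_div pnv.ne' (by norm_num)] at this
    have B3 : Real.log |crossP v v'| - Real.log 2 ≤ Real.log (nrm v') + Real.log |crossP v θ| := by
      have := Real.log_le_log (by positivity : (0:ℝ) < |crossP v v'| / 2) hlow
      rwa [Real.log_div pc.ne' (by norm_num), Real.log_mul pnv'.ne' pb.ne'] at this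
    have B4 : Real.log (nrm v') + Real.log |crossP v θ| ≤ Real.log 3 + Real.log |crossP v v'| := by
      have := Real.log_le_log (by positivity : (0:ℝ) < nrm v' * |crossP v θ|) hup
      rwa [Real.log_mul pnv'.ne' pb.ne', Real.log_mul (by norm_num) pc.ne'] at this
    constructor
    · rw [show Real.log (nrm v * nrm v' / |crossP v v'|)
          = Real.log (nrm v) + Real.log (nrm v') - Real.log |crossP v v'| from by
        rw [Real.log_div (by positivity) pc.ne', Real.log_mul pnv.ne' pnv'.ne']]
      simp only [Tcrit]
      rw [abs_le]
      constructor <;> linarith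
    · rw [show Real.log (nrm v' / (nrm v * |crossP v v'|))
          = Real.log (nrm v') - (Real.log (nrm v) + Real.log |crossP v v'|) from by
        rw [Real.log_div pnv'.ne' (by positivity), Real.log_mul pnv.ne' pc.ne']]
      simp only [Mcrit]
      rw [abs_le]
      constructor <;> linarith
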